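/- arXiv:1609.08669 — 2 statements merged into one kernel-verified Lean document; each statement's English description precedes it below -/
import Mathlib

section
/- Let Ω ⊆ ℝ^d be a bounded open set, L the normalized Lebesgue measure on Ω, p > 1, and f, g ∈ L^p(L; ℝ^m), at least one of which is Lipschitz. Set κ = min{Lip(f)^p, Lip(g)^p} (the minimum taken over those of f, g that are Lipschitz) and ε(λ) = 1/(1 + (λκ)^{1/(p−1)}). Then for every λ ∈ (0,∞), d_{TL^p_λ}((f,L),(g,L))^p ≥ ε(λ)^{p−1} ‖f−g‖_{L^p(L)}^p. -/
open MeasureTheory Filter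

noncomputable section

/-- `lpPow p x y = |x - y|_p^p = ∑ i, |x i - y i|^p`, the p-th power of the ℓ^p
distance between `x` and `y` in Euclidean space. -/
def lpPow (p : ℝ) {n : ℕ} (x y : Fin n → ℝ) : ℝ := ∑ i, |x i - y i| ^ p

/-- `Couplings μ ν` is the set of (probability) measures on the product whose first
marginal is `μ` and second marginal is `ν`. -/
def Couplings {α β : Type*} [MeasurableSpace α] [MeasurableSpace β]
    (μ : Measure α) (ν : Measure β) : Set (Measure (α × β)) :=
  {π | π.fst = μ ∧ π.snd = ν}

/-- The p-th power of the `TL^p_λ` distance: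
`inf_{π ∈ Π(μ,ν)} ∫ (1/λ)|x-y|_p^p + |f(x)-g(y)|_p^p dπ`. -/
def TLpPow {d m : ℕ} (p lam : ℝ) (f g : (Fin d → ℝ) → (Fin m → ℝ))
    (μ ν : Measure (Fin d → ℝ)) : ℝ :=
  sInf {r : ℝ | ∃ π ∈ Couplings μ ν,
    r = ∫ z : (Fin d → ℝ) × (Fin d → ℝ),
      ((1 / lam) * lpPow p z.1 z.2 + lpPow p (f z.1) (g z.2)) ∂π}

/-- The `TL^p_λ` distance. -/
def TLpDist {d m : ℕ} (p lam : ℝ) (f g : (Fin d → ℝ) → (Fin m → ℝ))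
    (μ ν : Measure (Fin d → ℝ)) : ℝ := TLpPow p lam f g μ ν ^ (1 / p)

/-- The normalized Lebesgue measure on `Ω`. -/
def nLeb {d : ℕ} (Ω : Set (Fin d → ℝ)) : Measure (Fin d → ℝ) :=
  (volume Ω)⁻¹ • volume.restrict Ω

lemma lpPow_nonneg (p : ℝ) {n : ℕ} (x y : Fin n → ℝ) : 0 ≤ lpPow p x y :=
  Finset.sum_nonneg fun _ _ => Real.rpow_nonneg (abs_nonneg _) _

lemma lpPow_comm (p : ℝ) {n : ℕ} (x y : Fin n → ℝ) : lpPow p x y = lpPow p y x := by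
  simp [lpPow, abs_sub_comm]

lemma lpPow_measurable {α : Type*} [MeasurableSpace α] (p : ℝ) {n : ℕ}
    {φ ψ : α → Fin n → ℝ} (hφ : Measurable φ) (hψ : Measurable ψ) :
    Measurable fun a => lpPow p (φ a) (ψ a) := by
  unfold lpPow
  exact Finset.measurable_sum _ fun i _ => by fun_prop

lemma key_scalar {p : ℝ} (hp : 1 < p) {s : ℝ} (hs : 0 < s) (u v : ℝ) :
    (1 / (1 + s)) ^ (p - 1) * |u + v| ^ p ≤ s ^ (1 - p) * |u| ^ p + |v| ^ p := by
  have h1s : (0:ℝ) < 1 + s := by linarith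
  set ε : ℝ := 1 / (1 + s) with hε
  have hεpos : 0 < ε := by positivity
  set t : ℝ := s / (1 + s) with ht
  have htpos : 0 < t := by positivity
  have h1t : 1 - t = ε := by rw [hε, ht]; field_simp; ring
  have hts : t = s * ε := by rw [hε, ht]; ring
  have habs : |u + v| ^ p ≤ (|u| + |v|) ^ p :=
    Real.rpow_le_rpow (abs_nonneg _) (abs_add_le _ _) (by linarith)
  have hconv := (convexOn_rpow hp.le).2 (Set.mem_Ici.mpr (by positivity : (0:ℝ) ≤ |u| / t))
      (Set.mem_Ici.mpr (by positivity : (0:ℝ) ≤ |v| / ε)) htpos.le hεpos.le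
      (by rw [← h1t]; ring)
  simp only [smul_eq_mul] at hconv
  rw [mul_div_cancel₀ _ htpos.ne', mul_div_cancel₀ _ hεpos.ne'] at hconv
  have hmain : (|u| + |v|) ^ p ≤ t ^ (1 - p) * |u| ^ p + ε ^ (1 - p) * |v| ^ p := by
    refine hconv.trans_eq ?_
    rw [Real.div_rpow (abs_nonneg _) htpos.le, Real.div_rpow (abs_nonneg _) hεpos.le,
        Real.rpow_sub htpos, Real.rpow_sub hεpos, Real.rpow_one, Real.rpow_one]
    ring
  have e1 : ε ^ (p - 1) * ε ^ (1 - p) = 1 := by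
    rw [← Real.rpow_add hεpos]; norm_num
  have e2 : ε ^ (p - 1) * t ^ (1 - p) = s ^ (1 - p) := by
    rw [hts, Real.mul_rpow hs.le hεpos.le]
    calc ε ^ (p-1) * (s ^ (1-p) * ε ^ (1-p)) = s ^ (1-p) * (ε ^ (p-1) * ε ^ (1-p)) := by ring
    _ = s ^ (1-p) := by rw [e1, mul_one]
  have hεnn : (0:ℝ) ≤ ε ^ (p - 1) := Real.rpow_nonneg hεpos.le _
  calc ε ^ (p-1) * |u + v| ^ p ≤ ε ^ (p-1) * ((|u| + |v|) ^ p) :=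
        mul_le_mul_of_nonneg_left habs hεnn
    _ ≤ ε ^ (p-1) * (t ^ (1-p) * |u| ^ p + ε ^ (1-p) * |v| ^ p) :=
        mul_le_mul_of_nonneg_left hmain hεnn
    _ = (ε ^ (p-1) * t ^ (1-p)) * |u| ^ p + (ε ^ (p-1) * ε ^ (1-p)) * |v| ^ p := by ring
    _ = s ^ (1-p) * |u| ^ p + |v| ^ p := by rw [e1, e2, one_mul]

lemma key_sum {p s : ℝ} (hp : 1 < p) (hs : 0 < s) {n : ℕ} (a b c : Fin n → ℝ) :
    (1 / (1 + s)) ^ (p - 1) * lpPow p a c ≤ s ^ (1 - p) * lpPow p a b + lpPow p b c := by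
  unfold lpPow
  rw [Finset.mul_sum, Finset.mul_sum, ← Finset.sum_add_distrib]
  refine Finset.sum_le_sum fun i _ => ?_
  have h := key_scalar hp hs (a i - b i) (b i - c i)
  have e : a i - b i + (b i - c i) = a i - c i := by ring
  rwa [e] at h

lemma lpPow_le_two {p : ℝ} (hp : 1 < p) {n : ℕ} (x y : Fin n → ℝ) :
    lpPow p x y ≤ ((1/(1+1):ℝ) ^ (p-1))⁻¹ * (lpPow p x 0 + lpPow p y 0) := by
  have hhalf : (0:ℝ) < ((1:ℝ)/(1+1)) ^ (p-1) := Real.rpow_pos_of_pos (by norm_num) _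
  have h := key_sum hp one_pos x 0 y
  rw [Real.one_rpow, one_mul, lpPow_comm p 0 y] at h
  rw [← mul_le_mul_iff_right₀ hhalf, ← mul_assoc, mul_inv_cancel₀ hhalf.ne', one_mul]
  exact h

lemma eq_of_lpPow_le_zero {p : ℝ} (hp : 0 < p) {n : ℕ} {x y : Fin n → ℝ}
    (h : lpPow p x y ≤ 0) : x = y := by
  funext i
  have hnn : ∀ j ∈ Finset.univ, (0:ℝ) ≤ |x j - y j| ^ p :=
    fun j _ => Real.rpow_nonneg (abs_nonneg _) _
  have h0 := (Finset.sum_eq_zero_iff_of_nonneg hnn).mp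
    (le_antisymm h (Finset.sum_nonneg hnn)) i (Finset.mem_univ i)
  have habs : |x i - y i| = 0 := by
    rwa [Real.rpow_eq_zero (abs_nonneg _) hp.ne'] at h0
  have := abs_eq_zero.mp habs
  linarith [this]

/-- For `p > 1`, if at least one of `f`, `g` is Lipschitz (with respect to the ℓ^p norms)
and `κ` bounds the p-th power of its Lipschitz constant, then with
`ε(λ) = 1/(1 + (λκ)^{1/(p−1)})` one has
`d_{TL^p_λ}((f,L),(g,L))^p ≥ ε(λ)^{p−1} ‖f−g‖_{L^p(L)}^p` for every `λ > 0`. -/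
theorem tlp_lower_bound_Lp_of_lipschitz
    {d m : ℕ} (p : ℝ) (hp : 1 < p)
    (Ω : Set (Fin d → ℝ)) (hΩo : IsOpen Ω) (hΩb : Bornology.IsBounded Ω)
    (hΩne : Ω.Nonempty)
    (f g : (Fin d → ℝ) → (Fin m → ℝ))
    (hf : Measurable f) (hg : Measurable g)
    (hfp : Integrable (fun x => lpPow p (f x) 0) (nLeb Ω))
    (hgp : Integrable (fun x => lpPow p (g x) 0) (nLeb Ω))
    (κ : ℝ) (hκ : 0 ≤ κ)
    (hLip : (∀ x y, lpPow p (f x) (f y) ≤ κ * lpPow p x y) ∨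
            (∀ x y, lpPow p (g x) (g y) ≤ κ * lpPow p x y))
    (lam : ℝ) (hlam : 0 < lam) :
    (1 / (1 + (lam * κ) ^ (1 / (p - 1)))) ^ (p - 1) *
        ∫ x, lpPow p (f x) (g x) ∂(nLeb Ω) ≤
      TLpPow p lam f g (nLeb Ω) (nLeb Ω) := by
  classical
  have hΩm : MeasurableSet Ω := hΩo.measurableSet
  have hvol0 : volume Ω ≠ 0 := (hΩo.measure_pos volume hΩne).ne'
  have hvoltop : volume Ω ≠ ⊤ := hΩb.measure_lt_top.ne
  set L : Measure (Fin d → ℝ) := nLeb Ω with hLdef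
  haveI hLprob : IsProbabilityMeasure L := by
    constructor
    show nLeb Ω Set.univ = 1
    rw [nLeb, Measure.smul_apply, Measure.restrict_apply_univ, smul_eq_mul]
    exact ENNReal.inv_mul_cancel hvol0 hvoltop
  have hLcompl : L Ωᶜ = 0 := by
    show nLeb Ω Ωᶜ = 0
    rw [nLeb, Measure.smul_apply, Measure.restrict_apply hΩm.compl]
    simp
  set s : ℝ := (lam * κ) ^ (1 / (p - 1)) with hsdef
  set ε : ℝ := 1 / (1 + s) with hεdef
  have hp1 : (0:ℝ) < p - 1 := by linarith
  have hs0 : 0 ≤ s := Real.rpow_nonneg (by positivity) _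
  have hεpos : 0 < ε := by rw [hεdef]; positivity
  have hεnn : 0 ≤ ε ^ (p - 1) := Real.rpow_nonneg hεpos.le _
  -- choose which coordinate carries the `L^p` distance between `f` and `g`
  obtain ⟨c, hcmeas, hcmap, hpt⟩ :
      ∃ c : (Fin d → ℝ) × (Fin d → ℝ) → (Fin d → ℝ), Measurable c ∧
        (∀ π : Measure ((Fin d → ℝ) × (Fin d → ℝ)), π ∈ Couplings L L → π.map c = L) ∧
        (∀ z : (Fin d → ℝ) × (Fin d → ℝ),
          ε ^ (p - 1) * lpPow p (f (c z)) (g (c z)) ≤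
            (1 / lam) * lpPow p z.1 z.2 + lpPow p (f z.1) (g z.2)) := by
    have hcost_nn : ∀ z : (Fin d → ℝ) × (Fin d → ℝ),
        (0:ℝ) ≤ (1 / lam) * lpPow p z.1 z.2 :=
      fun z => mul_nonneg (by positivity) (lpPow_nonneg _ _ _)
    rcases hLip with hLf | hLg
    · refine ⟨Prod.snd, measurable_snd, fun π hπ => hπ.2, fun z => ?_⟩
      rcases eq_or_lt_of_le hκ with hκ0 | hκpos
      · have hs : s = 0 := by
          rw [hsdef, ← hκ0, mul_zero, Real.zero_rpow (by positivity)]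
        have hε1 : ε ^ (p - 1) = 1 := by
          rw [hεdef, hs]; norm_num
        have hfc : f z.1 = f z.2 := by
          refine eq_of_lpPow_le_zero (by linarith : (0:ℝ) < p) ?_
          have h := hLf z.1 z.2
          rw [← hκ0, zero_mul] at h
          exact h
        rw [hε1, one_mul, hfc]
        exact le_add_of_nonneg_left (hcost_nn z)
      · have hlk : 0 < lam * κ := mul_pos hlam hκpos
        have hspos : 0 < s := Real.rpow_pos_of_pos hlk _
        have hsinv : s ^ (1 - p) = (lam * κ)⁻¹ := by
          rw [hsdef, ← Real.rpow_mul hlk.le]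
          have h2 : 1 / (p - 1) * (1 - p) = -1 := by field_simp; ring
          rw [h2, Real.rpow_neg_one]
        have hsl : s ^ (1 - p) * κ = 1 / lam := by
          rw [hsinv]; field_simp
        calc ε ^ (p - 1) * lpPow p (f z.2) (g z.2)
            ≤ s ^ (1 - p) * lpPow p (f z.2) (f z.1) + lpPow p (f z.1) (g z.2) :=
              key_sum hp hspos (f z.2) (f z.1) (g z.2)
          _ ≤ s ^ (1 - p) * (κ * lpPow p z.1 z.2) + lpPow p (f z.1) (g z.2) := by
              refine add_le_add
                (mul_le_mul_of_nonneg_left ?_ (Real.rpow_nonneg hspos.le _)) (le_refl _)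
              rw [lpPow_comm]
              exact hLf z.1 z.2
          _ = (1 / lam) * lpPow p z.1 z.2 + lpPow p (f z.1) (g z.2) := by
              rw [← mul_assoc, hsl]
    · refine ⟨Prod.fst, measurable_fst, fun π hπ => hπ.1, fun z => ?_⟩
      rcases eq_or_lt_of_le hκ with hκ0 | hκpos
      · have hs : s = 0 := by
          rw [hsdef, ← hκ0, mul_zero, Real.zero_rpow (by positivity)]
        have hε1 : ε ^ (p - 1) = 1 := by
          rw [hεdef, hs]; norm_num
        have hgc : g z.2 = g z.1 := by
          refine eq_of_lpPow_le_zero (by linarith : (0:ℝ) < p) ?_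
          have h := hLg z.2 z.1
          rw [← hκ0, zero_mul] at h
          exact h
        rw [hε1, one_mul, ← hgc]
        exact le_add_of_nonneg_left (hcost_nn z)
      · have hlk : 0 < lam * κ := mul_pos hlam hκpos
        have hspos : 0 < s := Real.rpow_pos_of_pos hlk _
        have hsinv : s ^ (1 - p) = (lam * κ)⁻¹ := by
          rw [hsdef, ← Real.rpow_mul hlk.le]
          have h2 : 1 / (p - 1) * (1 - p) = -1 := by field_simp; ring
          rw [h2, Real.rpow_neg_one]
        have hsl : s ^ (1 - p) * κ = 1 / lam := by
          rw [hsinv]; field_simp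
        calc ε ^ (p - 1) * lpPow p (f z.1) (g z.1)
            = ε ^ (p - 1) * lpPow p (g z.1) (f z.1) := by rw [lpPow_comm p (f z.1)]
          _ ≤ s ^ (1 - p) * lpPow p (g z.1) (g z.2) + lpPow p (g z.2) (f z.1) :=
              key_sum hp hspos (g z.1) (g z.2) (f z.1)
          _ ≤ s ^ (1 - p) * (κ * lpPow p z.1 z.2) + lpPow p (f z.1) (g z.2) := by
              refine add_le_add (mul_le_mul_of_nonneg_left ?_
                (Real.rpow_nonneg hspos.le _)) (le_of_eq (lpPow_comm _ _ _))
              exact hLg z.1 z.2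
          _ = (1 / lam) * lpPow p z.1 z.2 + lpPow p (f z.1) (g z.2) := by
              rw [← mul_assoc, hsl]
  -- measurability and integrability facts
  have hFmeas : Measurable fun x => lpPow p (f x) (g x) := lpPow_measurable p hf hg
  have hFint : Integrable (fun x => lpPow p (f x) (g x)) L := by
    refine Integrable.mono' ((hfp.add hgp).const_mul (((1/(1+1):ℝ) ^ (p-1))⁻¹))
      hFmeas.aestronglyMeasurable (Filter.Eventually.of_forall fun x => ?_)
    rw [Real.norm_eq_abs, abs_of_nonneg (lpPow_nonneg _ _ _)]
    exact lpPow_le_two hp (f x) (g x)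
  unfold TLpPow
  refine le_csInf ⟨_, L.prod L, ⟨Measure.fst_prod, Measure.snd_prod⟩, rfl⟩ ?_
  rintro r ⟨π, hπ, rfl⟩
  obtain ⟨hπ1, hπ2⟩ := hπ
  haveI hπprob : IsProbabilityMeasure π :=
    ⟨by rw [← Measure.fst_univ, hπ1]; exact measure_univ⟩
  have hmapc : π.map c = L := hcmap π ⟨hπ1, hπ2⟩
  have hFc : Integrable (fun z => lpPow p (f (c z)) (g (c z))) π := by
    have h := (integrable_map_measure hFmeas.aestronglyMeasurable
      hcmeas.aemeasurable).mp (by rw [hmapc]; exact hFint)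
    exact h
  -- the cost is integrable
  obtain ⟨R, hR⟩ := hΩb.subset_closedBall 0
  have haeΩ : ∀ᵐ z ∂π, z ∈ Ω ×ˢ Ω := by
    rw [MeasureTheory.ae_iff]
    have hsub : {z : (Fin d → ℝ) × (Fin d → ℝ) | ¬ z ∈ Ω ×ˢ Ω} ⊆
        (Prod.fst ⁻¹' Ωᶜ) ∪ (Prod.snd ⁻¹' Ωᶜ) := by
      intro z hz
      simp only [Set.mem_setOf_eq, Set.mem_prod, not_and_or] at hz
      simpa using hz
    refine measure_mono_null hsub (measure_union_null ?_ ?_)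
    · rw [← Measure.fst_apply hΩm.compl, hπ1]
      exact hLcompl
    · rw [← Measure.snd_apply hΩm.compl, hπ2]
      exact hLcompl
  have hcost1 : Integrable (fun z : (Fin d → ℝ) × (Fin d → ℝ) => lpPow p z.1 z.2) π := by
    refine Integrable.mono' (integrable_const ((d : ℝ) * (2*R) ^ p))
      (lpPow_measurable p measurable_fst measurable_snd).aestronglyMeasurable ?_
    filter_upwards [haeΩ] with z hz
    rw [Real.norm_eq_abs, abs_of_nonneg (lpPow_nonneg _ _ _)]
    have hb : ∀ i, |z.1 i - z.2 i| ^ p ≤ (2*R) ^ p := by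
      intro i
      refine Real.rpow_le_rpow (abs_nonneg _) ?_ (by linarith)
      have h1 : |z.1 i| ≤ R := by
        have hn := norm_le_pi_norm z.1 i
        have hm := hR hz.1
        rw [Metric.mem_closedBall, dist_zero_right] at hm
        calc |z.1 i| = ‖z.1 i‖ := (Real.norm_eq_abs _).symm
          _ ≤ ‖z.1‖ := hn
          _ ≤ R := hm
      have h2 : |z.2 i| ≤ R := by
        have hn := norm_le_pi_norm z.2 i
        have hm := hR hz.2
        rw [Metric.mem_closedBall, dist_zero_right] at hm
        calc |z.2 i| = ‖z.2 i‖ := (Real.norm_eq_abs _).symm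
          _ ≤ ‖z.2‖ := hn
          _ ≤ R := hm
      calc |z.1 i - z.2 i| ≤ |z.1 i| + |z.2 i| := abs_sub _ _
        _ ≤ 2*R := by linarith
    calc lpPow p z.1 z.2 ≤ ∑ _i : Fin d, (2*R) ^ p := Finset.sum_le_sum fun i _ => hb i
      _ = (d : ℝ) * (2*R) ^ p := by
          rw [Finset.sum_const, Finset.card_univ, Fintype.card_fin, nsmul_eq_mul]
  have hf1 : Integrable (fun z : (Fin d → ℝ) × (Fin d → ℝ) => lpPow p (f z.1) 0) π := by
    have h := (integrable_map_measure
      (lpPow_measurable p hf measurable_const).aestronglyMeasurable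
      measurable_fst.aemeasurable).mp
      (by rw [show π.map Prod.fst = π.fst from rfl, hπ1]; exact hfp)
    exact h
  have hg2 : Integrable (fun z : (Fin d → ℝ) × (Fin d → ℝ) => lpPow p (g z.2) 0) π := by
    have h := (integrable_map_measure
      (lpPow_measurable p hg measurable_const).aestronglyMeasurable
      measurable_snd.aemeasurable).mp
      (by rw [show π.map Prod.snd = π.snd from rfl, hπ2]; exact hgp)
    exact h
  have hcost2 : Integrable
      (fun z : (Fin d → ℝ) × (Fin d → ℝ) => lpPow p (f z.1) (g z.2)) π := by
    refine Integrable.mono' ((hf1.add hg2).const_mul (((1/(1+1):ℝ) ^ (p-1))⁻¹))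
      (lpPow_measurable p (hf.comp measurable_fst)
        (hg.comp measurable_snd)).aestronglyMeasurable
      (Filter.Eventually.of_forall fun z => ?_)
    rw [Real.norm_eq_abs, abs_of_nonneg (lpPow_nonneg _ _ _)]
    exact lpPow_le_two hp (f z.1) (g z.2)
  have hcost : Integrable
      (fun z : (Fin d → ℝ) × (Fin d → ℝ) =>
        (1 / lam) * lpPow p z.1 z.2 + lpPow p (f z.1) (g z.2)) π :=
    (hcost1.const_mul _).add hcost2
  calc ε ^ (p - 1) * ∫ x, lpPow p (f x) (g x) ∂L
      = ∫ z, ε ^ (p - 1) * lpPow p (f (c z)) (g (c z)) ∂π := by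
        rw [← hmapc, integral_map hcmeas.aemeasurable hFmeas.aestronglyMeasurable,
          MeasureTheory.integral_const_mul]
    _ ≤ ∫ z, ((1 / lam) * lpPow p z.1 z.2 + lpPow p (f z.1) (g z.2)) ∂π :=
        integral_mono (hFc.const_mul _) hcost hpt
end
end

section
/- The TL^p_λ distance equals the optimal transport cost between the measures raised onto the graphs: for Borel measurable f : Ω → ℝ^m, g : Ω → ℝ^m with f ∈ L^p(μ), g ∈ L^p(ν), letting μ̃ = (id, f)_#μ and ν̃ = (id, g)_#ν be the pushforwards of μ and ν onto Ω×ℝ^m by x ↦ (x, f(x)) and y ↦ (y, g(y)) respectively, and letting c_λ((x,u),(y,v)) = (1/λ)|x−y|_p^p + |u−v|_p^p, one has d_{TL^p_λ}((f,μ),(g,ν))^p = inf_{γ ∈ Π(μ̃, ν̃)} ∫ c_λ(z, w) dγ(z, w). -/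
open MeasureTheory Filter

noncomputable section

lemma measurable_lpPow' {α : Type*} [MeasurableSpace α] (p : ℝ) {n : ℕ}
    {F G : α → Fin n → ℝ} (hF : Measurable F) (hG : Measurable G) :
    Measurable fun a => lpPow p (F a) (G a) := by
  unfold lpPow
  exact Finset.measurable_sum _ fun i _ => (hF.eval.sub hG.eval).abs.pow_const p

/-- The `TL^p_λ` distance equals the optimal transport cost between the measures raised
onto the graphs of `f` and `g`, with cost
`c_λ((x,u),(y,v)) = (1/λ)|x−y|_p^p + |u−v|_p^p`. -/
theorem tlp_eq_OT_on_graphs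
    {d m : ℕ} (p lam : ℝ) (hp : 1 ≤ p) (hlam : 0 < lam)
    (Ω : Set (Fin d → ℝ)) (hΩo : IsOpen Ω) (hΩb : Bornology.IsBounded Ω)
    (μ ν : Measure (Fin d → ℝ))
    [IsProbabilityMeasure μ] [IsProbabilityMeasure ν]
    (hμ : μ Ωᶜ = 0) (hν : ν Ωᶜ = 0)
    (f g : (Fin d → ℝ) → (Fin m → ℝ))
    (hf : Measurable f) (hg : Measurable g)
    (hfp : Integrable (fun x => lpPow p (f x) 0) μ)
    (hgp : Integrable (fun x => lpPow p (g x) 0) ν) :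
    TLpPow p lam f g μ ν =
      sInf {r : ℝ | ∃ γ ∈ Couplings (μ.map (fun x => (x, f x)))
          (ν.map (fun y => (y, g y))),
        r = ∫ zw : ((Fin d → ℝ) × (Fin m → ℝ)) × ((Fin d → ℝ) × (Fin m → ℝ)),
          ((1 / lam) * lpPow p zw.1.1 zw.2.1 + lpPow p zw.1.2 zw.2.2) ∂γ} := by
  classical
  have hGf : Measurable (fun x : Fin d → ℝ => (x, f x)) := measurable_id.prodMk hf
  have hGg : Measurable (fun y : Fin d → ℝ => (y, g y)) := measurable_id.prodMk hg
  have hcAm : Measurable (fun z : (Fin d → ℝ) × (Fin d → ℝ) =>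
      (1 / lam) * lpPow p z.1 z.2 + lpPow p (f z.1) (g z.2)) := by
    apply Measurable.add
    · exact measurable_const.mul (measurable_lpPow' p measurable_fst measurable_snd)
    · exact measurable_lpPow' p (hf.comp measurable_fst) (hg.comp measurable_snd)
  have hcBm : Measurable (fun zw : ((Fin d → ℝ) × (Fin m → ℝ)) × ((Fin d → ℝ) × (Fin m → ℝ)) =>
      (1 / lam) * lpPow p zw.1.1 zw.2.1 + lpPow p zw.1.2 zw.2.2) := by
    apply Measurable.add
    · exact measurable_const.mul (measurable_lpPow' p measurable_fst.fst measurable_snd.fst)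
    · exact measurable_lpPow' p measurable_fst.snd measurable_snd.snd
  have hset : {r : ℝ | ∃ π ∈ Couplings μ ν,
        r = ∫ z : (Fin d → ℝ) × (Fin d → ℝ),
          ((1 / lam) * lpPow p z.1 z.2 + lpPow p (f z.1) (g z.2)) ∂π}
      = {r : ℝ | ∃ γ ∈ Couplings (μ.map (fun x => (x, f x))) (ν.map (fun y => (y, g y))),
          r = ∫ zw : ((Fin d → ℝ) × (Fin m → ℝ)) × ((Fin d → ℝ) × (Fin m → ℝ)),
            ((1 / lam) * lpPow p zw.1.1 zw.2.1 + lpPow p zw.1.2 zw.2.2) ∂γ} := by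
    ext r
    simp only [Set.mem_setOf_eq]
    constructor
    · rintro ⟨π, ⟨hπ1, hπ2⟩, rfl⟩
      set T : (Fin d → ℝ) × (Fin d → ℝ) → ((Fin d → ℝ) × (Fin m → ℝ)) × ((Fin d → ℝ) × (Fin m → ℝ)) :=
        fun z => ((z.1, f z.1), (z.2, g z.2)) with hT
      have hTm : Measurable T :=
        ((measurable_fst.prodMk (hf.comp measurable_fst)).prodMk
          (measurable_snd.prodMk (hg.comp measurable_snd)))
      refine ⟨π.map T, ⟨?_, ?_⟩, ?_⟩
      · calc (π.map T).fst
            = π.map (fun z : (Fin d → ℝ) × (Fin d → ℝ) => (z.1, f z.1)) :=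
              Measure.fst_map_prodMk (measurable_snd.prodMk (hg.comp measurable_snd))
          _ = (π.map Prod.fst).map (fun x => (x, f x)) :=
              (Measure.map_map hGf measurable_fst).symm
          _ = μ.map (fun x => (x, f x)) := by
              have h : π.map Prod.fst = μ := hπ1
              rw [h]
      · calc (π.map T).snd
            = π.map (fun z : (Fin d → ℝ) × (Fin d → ℝ) => (z.2, g z.2)) :=
              Measure.snd_map_prodMk (measurable_fst.prodMk (hf.comp measurable_fst))
          _ = (π.map Prod.snd).map (fun y => (y, g y)) :=
              (Measure.map_map hGg measurable_snd).symm
          _ = ν.map (fun y => (y, g y)) := by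
              have h : π.map Prod.snd = ν := hπ2
              rw [h]
      · rw [integral_map hTm.aemeasurable hcBm.aestronglyMeasurable]
    · rintro ⟨γ, ⟨hγ1, hγ2⟩, rfl⟩
      set S : ((Fin d → ℝ) × (Fin m → ℝ)) × ((Fin d → ℝ) × (Fin m → ℝ)) →
          (Fin d → ℝ) × (Fin d → ℝ) := fun w => (w.1.1, w.2.1) with hS
      have hSm : Measurable S := measurable_fst.fst.prodMk measurable_snd.fst
      have hGfset : MeasurableSet {z : (Fin d → ℝ) × (Fin m → ℝ) | z.2 = f z.1} := by
        have h : {z : (Fin d → ℝ) × (Fin m → ℝ) | z.2 = f z.1}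
            = (fun z : (Fin d → ℝ) × (Fin m → ℝ) => z.2 - f z.1) ⁻¹' {0} := by
          ext z; simp [sub_eq_zero]
        rw [h]
        exact (measurable_snd.sub (hf.comp measurable_fst)) (measurableSet_singleton 0)
      have hGgset : MeasurableSet {z : (Fin d → ℝ) × (Fin m → ℝ) | z.2 = g z.1} := by
        have h : {z : (Fin d → ℝ) × (Fin m → ℝ) | z.2 = g z.1}
            = (fun z : (Fin d → ℝ) × (Fin m → ℝ) => z.2 - g z.1) ⁻¹' {0} := by
          ext z; simp [sub_eq_zero]
        rw [h]
        exact (measurable_snd.sub (hg.comp measurable_fst)) (measurableSet_singleton 0)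
      have haef : ∀ᵐ w ∂γ, w.1.2 = f w.1.1 := by
        rw [ae_iff]
        have h1 : {w : ((Fin d → ℝ) × (Fin m → ℝ)) × ((Fin d → ℝ) × (Fin m → ℝ)) |
            ¬ w.1.2 = f w.1.1} = Prod.fst ⁻¹' {z : (Fin d → ℝ) × (Fin m → ℝ) | z.2 = f z.1}ᶜ :=
          rfl
        have h2 : ((fun x => (x, f x)) ⁻¹' {z : (Fin d → ℝ) × (Fin m → ℝ) | z.2 = f z.1}ᶜ)
            = (∅ : Set (Fin d → ℝ)) := by ext x; simp
        rw [h1, ← Measure.fst_apply hGfset.compl, hγ1,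
          Measure.map_apply hGf hGfset.compl, h2]
        exact measure_empty
      have haeg : ∀ᵐ w ∂γ, w.2.2 = g w.2.1 := by
        rw [ae_iff]
        have h1 : {w : ((Fin d → ℝ) × (Fin m → ℝ)) × ((Fin d → ℝ) × (Fin m → ℝ)) |
            ¬ w.2.2 = g w.2.1} = Prod.snd ⁻¹' {z : (Fin d → ℝ) × (Fin m → ℝ) | z.2 = g z.1}ᶜ :=
          rfl
        have h2 : ((fun y => (y, g y)) ⁻¹' {z : (Fin d → ℝ) × (Fin m → ℝ) | z.2 = g z.1}ᶜ)
            = (∅ : Set (Fin d → ℝ)) := by ext y; simp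
        rw [h1, ← Measure.snd_apply hGgset.compl, hγ2,
          Measure.map_apply hGg hGgset.compl, h2]
        exact measure_empty
      refine ⟨γ.map S, ⟨?_, ?_⟩, ?_⟩
      · calc (γ.map S).fst
            = γ.map (fun w : ((Fin d → ℝ) × (Fin m → ℝ)) × ((Fin d → ℝ) × (Fin m → ℝ)) =>
                w.1.1) := Measure.fst_map_prodMk measurable_snd.fst
          _ = (γ.map Prod.fst).map Prod.fst :=
              (Measure.map_map measurable_fst measurable_fst).symm
          _ = (μ.map (fun x => (x, f x))).fst := by
              have h : γ.map Prod.fst = μ.map (fun x => (x, f x)) := hγ1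
              rw [h]; rfl
          _ = μ.map id := Measure.fst_map_prodMk hf
          _ = μ := Measure.map_id
      · calc (γ.map S).snd
            = γ.map (fun w : ((Fin d → ℝ) × (Fin m → ℝ)) × ((Fin d → ℝ) × (Fin m → ℝ)) =>
                w.2.1) := Measure.snd_map_prodMk measurable_fst.fst
          _ = (γ.map Prod.snd).map Prod.fst :=
              (Measure.map_map measurable_fst measurable_snd).symm
          _ = (ν.map (fun y => (y, g y))).fst := by
              have h : γ.map Prod.snd = ν.map (fun y => (y, g y)) := hγ2
              rw [h]; rfl
          _ = ν.map id := Measure.fst_map_prodMk hg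
          _ = ν := Measure.map_id
      · rw [integral_map hSm.aemeasurable hcAm.aestronglyMeasurable]
        refine integral_congr_ae ?_
        filter_upwards [haef, haeg] with w h1 h2
        simp only [hS, h1, h2]
  unfold TLpPow
  rw [hset]
end
end
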